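/- If ε ∈ (0,1) and R ∈ ℕ satisfy (4/(3√π))·(e|τ|/(4(R+1)))^{2(R+1)} ≤ ε, then the tail of the Bessel series is bounded: 2 Σ_{l=0}^∞ |J_{2R+2l+2}(τ)| ≤ ε. -/

import Mathlib

/-- Bessel function of the first kind of (natural) order `n`. -/
noncomputable def besselJ (n : ℕ) (τ : ℝ) : ℝ :=
  ∑' m : ℕ, (-1 : ℝ) ^ m / (Nat.factorial m * Nat.factorial (m + n)) * (τ / 2) ^ (2 * m + n)

open Real
set_option maxHeartbeats 1000000

namespace BesselAux

/-- Summability of power series with factorially decaying coefficients. -/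
lemma summable_powSeries (a : ℕ → ℝ) (C : ℝ)
    (ha : ∀ m, |a m| ≤ C * 2 ^ m / m.factorial) (y : ℝ) :
    Summable fun m => a m * y ^ m := by
  have hC : 0 ≤ C := by
    have := (abs_nonneg (a 0)).trans (ha 0); simpa using this
  apply Summable.of_norm_bounded (g := fun m => C * (2 * (|y| + 1)) ^ m / m.factorial)
    (by simpa [mul_div_assoc] using ((Real.summable_pow_div_factorial (2 * (|y| + 1))).mul_left C))
  intro m
  have h1 : |a m * y ^ m| ≤ (C * 2 ^ m / m.factorial) * (|y| + 1) ^ m := by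
    rw [abs_mul, abs_pow]
    apply mul_le_mul (ha m) (pow_le_pow_left₀ (abs_nonneg y) (by linarith) m)
      (by positivity) (by positivity)
  calc ‖a m * y ^ m‖ = |a m * y ^ m| := rfl
    _ ≤ (C * 2 ^ m / m.factorial) * (|y| + 1) ^ m := h1
    _ = C * (2 * (|y| + 1)) ^ m / m.factorial := by rw [mul_pow]; ring

/-- Term-by-term differentiation of power series with factorially decaying coefficients. -/
lemma hasDerivAt_powSeries (a : ℕ → ℝ) (C : ℝ)
    (ha : ∀ m, |a m| ≤ C * 2 ^ m / m.factorial) (y : ℝ) :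
    HasDerivAt (fun z => ∑' m, a m * z ^ m)
      (∑' m : ℕ, ((m : ℝ) + 1) * a (m + 1) * y ^ m) y := by
  have hC : 0 ≤ C := by
    have := (abs_nonneg (a 0)).trans (ha 0); simpa using this
  set Y : ℝ := |y| + 1 with hY
  have hY1 : (1 : ℝ) ≤ Y := by have := abs_nonneg y; linarith
  have hyY : |y| < Y := by simp [hY]
  -- uniform bound on derivatives on Ioo (-Y) Y
  set u : ℕ → ℝ := fun m => C * (4 * Y) ^ m / m.factorial with hu_def
  have hu : Summable u := by simpa [hu_def, mul_div_assoc] using ((Real.summable_pow_div_factorial (4 * Y)).mul_left C)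
  have key : HasDerivAt (fun z => ∑' m, a m * z ^ m)
      (∑' m, a m * ((m : ℝ) * y ^ (m - 1))) y := by
    refine hasDerivAt_tsum_of_isPreconnected hu (isOpen_Ioo : IsOpen (Set.Ioo (-Y) Y))
      (convex_Ioo _ _).isPreconnected
      (fun m z _ => (hasDerivAt_pow m z).const_mul (a m))
      (fun m z hz => ?_) (show y ∈ Set.Ioo (-Y) Y by constructor <;> [nlinarith [neg_abs_le y]; nlinarith [le_abs_self y]])
      (summable_powSeries a C ha y)
      (show y ∈ Set.Ioo (-Y) Y by constructor <;> [nlinarith [neg_abs_le y]; nlinarith [le_abs_self y]])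
    -- bound ‖a m * (m * z^(m-1))‖ ≤ u m
    have hzY : |z| ≤ Y := by
      rw [abs_le]; exact ⟨hz.1.le, hz.2.le⟩
    have hm2 : (m : ℝ) ≤ 2 ^ m := by exact_mod_cast (Nat.lt_two_pow_self (n := m)).le
    have hzp : |z| ^ (m - 1) ≤ Y ^ m :=
      (pow_le_pow_left₀ (abs_nonneg z) hzY _).trans
        (pow_le_pow_right₀ (by linarith) (Nat.sub_le m 1))
    calc ‖a m * ((m : ℝ) * z ^ (m - 1))‖
        = |a m| * ((m : ℝ) * |z| ^ (m - 1)) := by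
          rw [norm_eq_abs, abs_mul, abs_mul, abs_pow, Nat.abs_cast]
      _ ≤ (C * 2 ^ m / m.factorial) * (2 ^ m * Y ^ m) := by
          apply mul_le_mul (ha m) ?_ (by positivity) (by positivity)
          exact mul_le_mul hm2 hzp (by positivity) (by positivity)
      _ = C * (4 * Y) ^ m / m.factorial := by
          rw [mul_pow, show (4:ℝ) = 2 * 2 by norm_num, mul_pow]; ring
  -- reindex the derivative sum
  have hsum : Summable (fun m => a m * ((m : ℝ) * y ^ (m - 1))) := by
    apply Summable.of_norm_bounded (g := u) hu
    intro m
    have hm2 : (m : ℝ) ≤ 2 ^ m := by exact_mod_cast (Nat.lt_two_pow_self (n := m)).le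
    have hzp : |y| ^ (m - 1) ≤ Y ^ m :=
      (pow_le_pow_left₀ (abs_nonneg y) hyY.le _).trans
        (pow_le_pow_right₀ (by linarith) (Nat.sub_le m 1))
    calc ‖a m * ((m : ℝ) * y ^ (m - 1))‖
        = |a m| * ((m : ℝ) * |y| ^ (m - 1)) := by
          rw [norm_eq_abs, abs_mul, abs_mul, abs_pow, Nat.abs_cast]
      _ ≤ (C * 2 ^ m / m.factorial) * (2 ^ m * Y ^ m) := by
          apply mul_le_mul (ha m) ?_ (by positivity) (by positivity)
          exact mul_le_mul hm2 hzp (by positivity) (by positivity)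
      _ = C * (4 * Y) ^ m / m.factorial := by
          rw [mul_pow, show (4:ℝ) = 2 * 2 by norm_num, mul_pow]; ring
  have hre : (∑' m, a m * ((m : ℝ) * y ^ (m - 1)))
      = ∑' m : ℕ, ((m : ℝ) + 1) * a (m + 1) * y ^ m := by
    rw [Summable.tsum_eq_zero_add hsum]
    simp only [Nat.cast_zero, zero_mul, mul_zero, zero_add]
    congr 1
    funext m
    push_cast
    ring
  rwa [hre] at key


noncomputable def c (n m : ℕ) : ℝ := (-1) ^ m / (m.factorial * (m + n).factorial)

noncomputable def c1 (n m : ℕ) : ℝ := ((m : ℝ) + 1) * c n (m + 1)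

noncomputable def c2 (n m : ℕ) : ℝ := ((m : ℝ) + 1) * c1 n (m + 1)

lemma abs_c (n m : ℕ) : |c n m| = 1 / (m.factorial * (m + n).factorial) := by
  rw [c, abs_div, abs_pow, abs_neg, abs_one, one_pow]
  congr 1
  rw [abs_of_pos]
  positivity

lemma bound_helper (n m K : ℕ) (hK : n.factorial ≤ K) :
    1 / ((m.factorial : ℝ) * K) ≤ (1 / n.factorial) * 2 ^ m / m.factorial := by
  have hK0 : 0 < K := lt_of_lt_of_le n.factorial_pos hK
  have hKR : (n.factorial : ℝ) ≤ K := by exact_mod_cast hK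
  have h2 : (0:ℝ) < n.factorial := by exact_mod_cast n.factorial_pos
  have h3 : (0:ℝ) < m.factorial := by exact_mod_cast m.factorial_pos
  have hK0R : (0:ℝ) < K := by exact_mod_cast hK0
  have e : (1 / (n.factorial:ℝ)) * 2 ^ m / m.factorial
      = 2 ^ m / (m.factorial * n.factorial) := by
    field_simp
  rw [e]
  gcongr
  exact one_le_pow₀ (by norm_num)

lemma c_bound (n m : ℕ) : |c n m| ≤ (1 / n.factorial) * 2 ^ m / m.factorial := by
  rw [abs_c]
  exact_mod_cast bound_helper n m (m+n).factorial
    (Nat.factorial_le (Nat.le_add_left n m))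

lemma c1_eq (n m : ℕ) : |c1 n m| = 1 / ((m.factorial : ℝ) * (m+1+n).factorial) := by
  rw [c1, abs_mul, abs_c, abs_of_pos (by positivity : (0:ℝ) < (m:ℝ) + 1)]
  have hfs : ((m+1).factorial : ℝ) = ((m:ℝ) + 1) * m.factorial := by
    rw [Nat.factorial_succ]; push_cast; ring
  rw [hfs]
  have h3 : (0:ℝ) < m.factorial := by exact_mod_cast m.factorial_pos
  have h4 : (0:ℝ) < ((m+1+n).factorial : ℝ) := by exact_mod_cast (m+1+n).factorial_pos
  field_simp

lemma c1_bound (n m : ℕ) : |c1 n m| ≤ (1 / n.factorial) * 2 ^ m / m.factorial := by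
  rw [c1_eq]
  exact bound_helper n m (m+1+n).factorial (Nat.factorial_le (Nat.le_add_left n (m+1)))

lemma c2_bound (n m : ℕ) : |c2 n m| ≤ (1 / n.factorial) * 2 ^ m / m.factorial := by
  have e1 : |c2 n m| = 1 / ((m.factorial : ℝ) * (m+2+n).factorial) := by
    rw [c2, abs_mul, abs_of_pos (by positivity : (0:ℝ) < (m:ℝ) + 1), c1_eq]
    have hfs : ((m+1).factorial : ℝ) = ((m:ℝ) + 1) * m.factorial := by
      rw [Nat.factorial_succ]; push_cast; ring
    rw [show m + 1 + 1 + n = m + 2 + n by ring, hfs]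
    have h3 : (0:ℝ) < m.factorial := by exact_mod_cast m.factorial_pos
    have h4 : (0:ℝ) < ((m+2+n).factorial : ℝ) := by exact_mod_cast (m+2+n).factorial_pos
    field_simp
  rw [e1]
  exact bound_helper n m (m+2+n).factorial (Nat.factorial_le (Nat.le_add_left n (m+2)))

noncomputable def f (n : ℕ) (y : ℝ) : ℝ := ∑' m, c n m * y ^ m
noncomputable def f1 (n : ℕ) (y : ℝ) : ℝ := ∑' m, c1 n m * y ^ m
noncomputable def f2 (n : ℕ) (y : ℝ) : ℝ := ∑' m, c2 n m * y ^ m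

lemma hasDerivAt_f (n : ℕ) (y : ℝ) : HasDerivAt (f n) (f1 n y) y := by
  have := hasDerivAt_powSeries (c n) (1 / n.factorial) (c_bound n) y
  have hf : f n = fun z => ∑' m, c n m * z ^ m := rfl
  simpa [hf, f1, c1] using this

lemma hasDerivAt_f1 (n : ℕ) (y : ℝ) : HasDerivAt (f1 n) (f2 n y) y := by
  have := hasDerivAt_powSeries (c1 n) (1 / n.factorial) (c1_bound n) y
  have hf : f1 n = fun z => ∑' m, c1 n m * z ^ m := rfl
  simpa [hf, f2, c2] using this


-- auxiliary coefficient sequence for `y * f2`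
noncomputable def e (n m : ℕ) : ℝ := (m : ℝ) * c1 n m

lemma e_bound (n m : ℕ) : |e n m| ≤ (1 / n.factorial) * 2 ^ m / m.factorial := by
  have h2 : (0:ℝ) < n.factorial := by exact_mod_cast n.factorial_pos
  have h3 : (0:ℝ) < m.factorial := by exact_mod_cast m.factorial_pos
  have h4 : (0:ℝ) < ((m+1+n).factorial : ℝ) := by exact_mod_cast (m+1+n).factorial_pos
  have hnf : (n.factorial : ℝ) ≤ (m+1+n).factorial := by
    exact_mod_cast Nat.factorial_le (Nat.le_add_left n (m+1))
  have hm2 : (m : ℝ) ≤ 2 ^ m := by exact_mod_cast (Nat.lt_two_pow_self (n := m)).le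
  rw [e, abs_mul, Nat.abs_cast, c1_eq]
  calc (m:ℝ) * (1 / (m.factorial * (m+1+n).factorial))
      ≤ 2 ^ m * (1 / (m.factorial * n.factorial)) := by
        gcongr
    _ = 1 / n.factorial * 2 ^ m / m.factorial := by field_simp

lemma coeff_ode (n m : ℕ) : e n m + ((n:ℝ) + 1) * c1 n m + c n m = 0 := by
  rw [e, c1, c]
  have h1 : ((m+1).factorial : ℝ) = ((m:ℝ) + 1) * m.factorial := by
    rw [Nat.factorial_succ]; push_cast; ring
  have h2 : ((m+1+n).factorial : ℝ) = ((m:ℝ) + (n:ℝ) + 1) * (m+n).factorial := by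
    rw [show m+1+n = (m+n)+1 by ring, Nat.factorial_succ]; push_cast; ring
  rw [c, h1, h2, pow_succ]
  have h3 : (0:ℝ) < m.factorial := by exact_mod_cast m.factorial_pos
  have h4 : (0:ℝ) < ((m+n).factorial : ℝ) := by exact_mod_cast (m+n).factorial_pos
  field_simp
  ring

lemma ode (n : ℕ) (y : ℝ) : y * f2 n y + ((n:ℝ) + 1) * f1 n y + f n y = 0 := by
  have hsf : Summable (fun m => c n m * y ^ m) := summable_powSeries _ _ (c_bound n) y
  have hsf1 : Summable (fun m => c1 n m * y ^ m) := summable_powSeries _ _ (c1_bound n) y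
  have hse : Summable (fun m => e n m * y ^ m) := summable_powSeries _ _ (e_bound n) y
  have h1 : y * f2 n y = ∑' m, e n m * y ^ m := by
    rw [f2, ← tsum_mul_left, Summable.tsum_eq_zero_add hse]
    simp only [e, Nat.cast_zero, zero_mul, zero_add]
    congr 1
    funext m
    rw [c2]
    push_cast
    ring
  have h2 : ((n:ℝ) + 1) * f1 n y = ∑' m, ((n:ℝ) + 1) * c1 n m * y ^ m := by
    rw [f1, ← tsum_mul_left]
    congr 1; funext m; ring
  have hsf1' : Summable (fun m => ((n:ℝ) + 1) * c1 n m * y ^ m) := by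
    simpa [mul_assoc] using hsf1.mul_left ((n:ℝ)+1)
  rw [h1, h2, f, ← Summable.tsum_add hse hsf1', ← Summable.tsum_add (hse.add hsf1') hsf]
  have : ∀ m : ℕ, e n m * y ^ m + ((n:ℝ) + 1) * c1 n m * y ^ m + c n m * y ^ m = 0 := by
    intro m
    have h := coeff_ode n m
    have e1 : e n m * y ^ m + ((n:ℝ) + 1) * c1 n m * y ^ m + c n m * y ^ m
        = (e n m + ((n:ℝ) + 1) * c1 n m + c n m) * y ^ m := by ring
    rw [e1, h, zero_mul]
  simp only [this, tsum_zero]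

lemma f_zero (n : ℕ) : f n 0 = 1 / n.factorial := by
  rw [f, tsum_eq_single 0]
  · simp [c]
  · intro m hm
    simp [zero_pow hm]

lemma abs_f_le (n : ℕ) (y : ℝ) (hy : 0 ≤ y) : |f n y| ≤ 1 / n.factorial := by
  set E : ℝ → ℝ := fun z => f n z ^ 2 + z * f1 n z ^ 2 with hE_def
  have hE : ∀ z : ℝ, HasDerivAt E
      (2 * f n z * f1 n z + (1 * f1 n z ^ 2 + z * (2 * f1 n z * f2 n z))) z := by
    intro z
    have hsq : HasDerivAt (fun w => f n w ^ 2) (2 * f n z * f1 n z) z := by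
      simpa using (hasDerivAt_f n z).fun_pow 2
    have hsq2 : HasDerivAt (fun w => f1 n w ^ 2) (2 * f1 n z * f2 n z) z := by
      simpa using (hasDerivAt_f1 n z).fun_pow 2
    exact hsq.add ((hasDerivAt_id z).mul hsq2)
  have hderiv : ∀ z : ℝ, deriv E z ≤ 0 := by
    intro z
    rw [(hE z).deriv]
    have hode := ode n z
    have hz2 : z * (2 * f1 n z * f2 n z) = 2 * f1 n z * (z * f2 n z) := by ring
    have : z * f2 n z = -(((n:ℝ) + 1) * f1 n z + f n z) := by linarith
    rw [hz2, this]
    nlinarith [sq_nonneg (f1 n z), (Nat.cast_nonneg n : (0:ℝ) ≤ (n:ℝ))]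
  have hanti : AntitoneOn E (Set.Ici (0:ℝ)) := by
    apply antitoneOn_of_deriv_nonpos (convex_Ici 0)
    · exact fun z _ => (hE z).continuousAt.continuousWithinAt
    · exact fun z _ => (hE z).differentiableAt.differentiableWithinAt
    · exact fun z _ => hderiv z
  have hle : E y ≤ E 0 := hanti (Set.self_mem_Ici) hy hy
  have h0 : E 0 = (1 / n.factorial) ^ 2 := by
    simp [hE_def, f_zero]
  have hfy : f n y ^ 2 ≤ (1 / n.factorial) ^ 2 := by
    have : f n y ^ 2 ≤ E y := by
      simp only [hE_def]
      nlinarith [sq_nonneg (f1 n y)]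
    rw [h0] at hle
    exact le_trans this hle
  have hpos : (0:ℝ) ≤ 1 / n.factorial := by positivity
  nlinarith [abs_nonneg (f n y), sq_abs (f n y)]


lemma besselJ_eq (n : ℕ) (τ : ℝ) : besselJ n τ = f n ((τ/2)^2) * (τ/2)^n := by
  rw [besselJ, f, ← tsum_mul_right]
  congr 1
  funext m
  rw [c, pow_add, pow_mul]
  ring

lemma besselJ_bound (n : ℕ) (τ : ℝ) :
    |besselJ n τ| ≤ (|τ|/2)^n / n.factorial := by
  rw [besselJ_eq, abs_mul, abs_pow]
  have h1 := abs_f_le n ((τ/2)^2) (sq_nonneg _)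
  have h2 : |τ/2| = |τ|/2 := by rw [abs_div]; norm_num
  rw [h2]
  calc |f n ((τ/2)^2)| * (|τ|/2)^n ≤ (1/n.factorial) * (|τ|/2)^n := by
        apply mul_le_mul_of_nonneg_right h1 (by positivity)
    _ = (|τ|/2)^n / n.factorial := by ring

/-- Stirling lower bound. -/
lemma factorial_ge (n : ℕ) (hn : 1 ≤ n) :
    Real.sqrt π * (Real.sqrt (2*n) * ((n:ℝ)/exp 1)^n) ≤ n.factorial := by
  obtain ⟨k, rfl⟩ : ∃ k, n = k + 1 := ⟨n - 1, by omega⟩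
  have htend : Filter.Tendsto (Stirling.stirlingSeq ∘ Nat.succ) Filter.atTop (nhds (Real.sqrt π)) :=
    Stirling.tendsto_stirlingSeq_sqrt_pi.comp (Filter.tendsto_add_atTop_nat 1)
  have h1 : Real.sqrt π ≤ Stirling.stirlingSeq (k + 1) :=
    Stirling.stirlingSeq'_antitone.le_of_tendsto htend k
  rw [Stirling.stirlingSeq] at h1
  have hpos : 0 < Real.sqrt (2*(k+1:ℕ):ℝ) * (((k+1:ℕ):ℝ)/exp 1)^(k+1) := by
    have : (0:ℝ) < ((k+1:ℕ):ℝ) := by positivity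
    positivity
  rw [le_div_iff₀ hpos] at h1
  calc Real.sqrt π * (Real.sqrt (2*(k+1:ℕ):ℝ) * (((k+1:ℕ):ℝ)/exp 1)^(k+1))
      = Real.sqrt π * Real.sqrt (2*(k+1:ℕ):ℝ) * (((k+1:ℕ):ℝ)/exp 1)^(k+1) := by ring
    _ ≤ (k+1).factorial := by
        have := h1
        nlinarith [this, Real.sqrt_nonneg π, hpos]

/-- geometric domination of tail terms -/
lemma tail_term (x : ℝ) (hx : 0 ≤ x) (n0 : ℕ) (l : ℕ) :
    x^(n0+2*l) / ((n0+2*l).factorial : ℝ)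
      ≤ x^n0/(n0.factorial : ℝ) * (x^2/(((n0:ℝ)+1)*((n0:ℝ)+2)))^l := by
  induction l with
  | zero => simp
  | succ l ih =>
    have hk : n0 + 2*(l+1) = (n0+2*l) + 2 := by ring
    set k := n0 + 2*l with hkdef
    have hfac : (((k+2).factorial : ℕ) : ℝ) = ((k:ℝ)+2) * (((k:ℝ)+1) * (k.factorial : ℝ)) := by
      rw [show k+2 = (k+1)+1 by ring, Nat.factorial_succ, Nat.factorial_succ]; push_cast; ring
    have hstep : x^(k+2) / (((k+2).factorial : ℕ) : ℝ)
        = x^k/(k.factorial : ℝ) * (x^2/(((k:ℝ)+1)*((k:ℝ)+2))) := by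
      rw [hfac, pow_add]
      have h1 : (0:ℝ) < (k.factorial : ℝ) := by exact_mod_cast k.factorial_pos
      have h2 : (0:ℝ) < (k:ℝ)+1 := by positivity
      have h3 : (0:ℝ) < (k:ℝ)+2 := by positivity
      field_simp
      try simp
    have hmono : x^2/(((k:ℝ)+1)*((k:ℝ)+2)) ≤ x^2/(((n0:ℝ)+1)*((n0:ℝ)+2)) := by
      apply div_le_div_of_nonneg_left (sq_nonneg x) (by positivity)
      have hkn : (n0:ℝ) ≤ (k:ℝ) := by
        have : n0 ≤ k := by omega
        exact_mod_cast this
      nlinarith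
    rw [hk, hstep, pow_succ]
    have hterm : (0:ℝ) ≤ x^k/(k.factorial : ℝ) := by positivity
    have hgeom : (0:ℝ) ≤ x^n0/(n0.factorial : ℝ) * (x^2/(((n0:ℝ)+1)*((n0:ℝ)+2)))^l := by positivity
    calc x^k/(k.factorial:ℝ) * (x^2/(((k:ℝ)+1)*((k:ℝ)+2)))
        ≤ (x^n0/(n0.factorial : ℝ) * (x^2/(((n0:ℝ)+1)*((n0:ℝ)+2)))^l) * (x^2/(((n0:ℝ)+1)*((n0:ℝ)+2))) := by
          apply mul_le_mul ih hmono (by positivity) hgeom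
      _ = x^n0/(n0.factorial : ℝ) * ((x^2/(((n0:ℝ)+1)*((n0:ℝ)+2)))^l * (x^2/(((n0:ℝ)+1)*((n0:ℝ)+2)))) := by ring


end BesselAux

/-- If `(4/(3√π))·(e|τ|/(4(R+1)))^(2(R+1)) ≤ ε` with `ε ∈ (0,1)`, then the Bessel tail sum is
bounded by `ε`. -/
theorem bessel_tail_bound (τ : ℝ) (R : ℕ) (ε : ℝ) (hε : ε ∈ Set.Ioo (0 : ℝ) 1)
    (h : 4 / (3 * Real.sqrt Real.pi) *
        (Real.exp 1 * |τ| / (4 * (R + 1))) ^ (2 * (R + 1)) ≤ ε) :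
    2 * ∑' l : ℕ, |besselJ (2 * R + 2 * l + 2) τ| ≤ ε := by
  obtain ⟨hε0, hε1⟩ := hε
  set x : ℝ := |τ| / 2 with hxdef
  have hx : 0 ≤ x := by positivity
  set n0 : ℕ := 2 * R + 2 with hn0def
  set A : ℝ := Real.exp 1 * |τ| / (4 * (R + 1)) with hAdef
  have hA : 0 ≤ A := by positivity
  have hn0R : ((n0:ℝ)) = 2 * (R:ℝ) + 2 := by exact_mod_cast rfl
  have hn0pos : (0:ℝ) < n0 := by rw [hn0R]; positivity
  -- A = e x / n0
  have hAx : A = Real.exp 1 * x / n0 := by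
    rw [hAdef, hxdef, hn0R]
    field_simp
    ring_nf
    try simp
  have hxA : x = A * n0 / Real.exp 1 := by
    rw [hAx]; field_simp
  -- sqrt pi bounds
  have hsp_pos : 0 < Real.sqrt π := Real.sqrt_pos.mpr Real.pi_pos
  have hsp_lb : (4:ℝ)/3 ≤ Real.sqrt π := by
    rw [show (4:ℝ)/3 = Real.sqrt ((4/3)^2) by rw [Real.sqrt_sq (by norm_num)]]
    apply Real.sqrt_le_sqrt
    nlinarith [Real.pi_gt_three]
  have hsp_ub : Real.sqrt π ≤ 1.8 := by
    rw [show (1.8:ℝ) = Real.sqrt (1.8^2) by rw [Real.sqrt_sq (by norm_num)]]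
    apply Real.sqrt_le_sqrt
    nlinarith [Real.pi_lt_d2]
  -- A^2 ≤ 3√π/4 ≤ 1.35
  have hpow : A ^ (2*(R+1)) ≤ ε * (3 * Real.sqrt π) / 4 := by
    have step := mul_le_mul_of_nonneg_right h
      (le_of_lt (by positivity : (0:ℝ) < 3*Real.sqrt π/4))
    calc A ^ (2*(R+1)) = 4 / (3*Real.sqrt π) * A ^ (2*(R+1)) * (3*Real.sqrt π/4) := by
          field_simp
      _ ≤ ε * (3*Real.sqrt π/4) := step
      _ = ε * (3*Real.sqrt π)/4 := by ring
  have hA2 : A^2 ≤ 3 * Real.sqrt π / 4 := by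
    rcases le_or_gt A 1 with hA1 | hA1
    · have : A^2 ≤ 1 := by nlinarith
      nlinarith [hsp_lb]
    · have h2le : A^2 ≤ A^(2*(R+1)) := by
        apply pow_le_pow_right₀ hA1.le
        omega
      have : ε * (3 * Real.sqrt π) / 4 ≤ 3 * Real.sqrt π / 4 := by nlinarith [hsp_pos]
      linarith
  have hA2' : A^2 ≤ 1.35 := by nlinarith [hsp_ub]
  -- r ≤ 1/4
  set r : ℝ := x^2/(((n0:ℝ)+1)*((n0:ℝ)+2)) with hrdef
  have hr0 : 0 ≤ r := by positivity
  have he_lb : (2.7:ℝ) ≤ Real.exp 1 := by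
    have := Real.exp_one_gt_d9
    linarith
  have hx2 : x^2 = A^2 * (n0:ℝ)^2 / (Real.exp 1)^2 := by
    rw [hxA]; field_simp
  have hr14 : r ≤ 1/4 := by
    rw [hrdef, hx2]
    rw [div_le_iff₀ (by positivity)]
    have h1 : (n0:ℝ)^2 ≤ ((n0:ℝ)+1)*((n0:ℝ)+2) := by nlinarith [hn0pos]
    have h2 : (7.29:ℝ) ≤ (Real.exp 1)^2 := by nlinarith [he_lb]
    have hA2nn : 0 ≤ A^2 := sq_nonneg A
    calc A^2 * (n0:ℝ)^2 / (Real.exp 1)^2 ≤ A^2 * (((n0:ℝ)+1)*((n0:ℝ)+2)) / 7.29 := by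
          apply div_le_div₀ (by positivity) (by nlinarith) (by norm_num) h2
      _ ≤ 1/4 * (((n0:ℝ)+1)*((n0:ℝ)+2)) := by
          rw [div_le_iff₀ (by norm_num)]
          nlinarith [hn0pos, hA2']
  have hr1 : r < 1 := lt_of_le_of_lt hr14 (by norm_num)
  -- summability and tsum bound
  have hgeom_sum : Summable (fun l : ℕ => x^n0/(n0.factorial:ℝ) * r^l) :=
    (summable_geometric_of_lt_one hr0 hr1).mul_left _
  have hterm : ∀ l : ℕ, |besselJ (2*R+2*l+2) τ| ≤ x^n0/(n0.factorial:ℝ) * r^l := by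
    intro l
    have hidx : 2*R+2*l+2 = n0 + 2*l := by omega
    rw [hidx]
    calc |besselJ (n0+2*l) τ| ≤ x^(n0+2*l) / ((n0+2*l).factorial : ℝ) :=
          BesselAux.besselJ_bound _ τ
      _ ≤ x^n0/(n0.factorial:ℝ) * r^l := BesselAux.tail_term x hx n0 l
  have hsum : Summable (fun l : ℕ => |besselJ (2*R+2*l+2) τ|) :=
    Summable.of_nonneg_of_le (fun l => abs_nonneg _) hterm hgeom_sum
  have htsum : ∑' l : ℕ, |besselJ (2*R+2*l+2) τ| ≤ x^n0/(n0.factorial:ℝ) * (1-r)⁻¹ := by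
    calc ∑' l : ℕ, |besselJ (2*R+2*l+2) τ| ≤ ∑' l : ℕ, x^n0/(n0.factorial:ℝ) * r^l :=
          Summable.tsum_le_tsum hterm hsum hgeom_sum
      _ = x^n0/(n0.factorial:ℝ) * (1-r)⁻¹ := by
          rw [tsum_mul_left, tsum_geometric_of_lt_one hr0 hr1]
  -- Stirling
  have hstir := BesselAux.factorial_ge n0 (by omega)
  have hsqrt2n : (2:ℝ) ≤ Real.sqrt (2*(n0:ℕ):ℝ) := by
    have h2n : (4:ℝ) ≤ 2*(n0:ℝ) := by
      have hR0 : (0:ℝ) ≤ (R:ℝ) := Nat.cast_nonneg R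
      have : (2:ℝ) ≤ (n0:ℝ) := by rw [hn0R]; linarith
      linarith
    calc (2:ℝ) = Real.sqrt 4 := by
          rw [show (4:ℝ) = 2^2 by norm_num, Real.sqrt_sq (by norm_num)]
      _ ≤ Real.sqrt (2*(n0:ℕ):ℝ) := Real.sqrt_le_sqrt h2n
  have hfac_lb : 2 * Real.sqrt π * ((n0:ℝ)/Real.exp 1)^n0 ≤ (n0.factorial:ℝ) := by
    calc 2 * Real.sqrt π * ((n0:ℝ)/Real.exp 1)^n0
        ≤ Real.sqrt π * (Real.sqrt (2*(n0:ℕ):ℝ) * ((n0:ℝ)/Real.exp 1)^n0) := by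
          have hp : (0:ℝ) ≤ ((n0:ℝ)/Real.exp 1)^n0 := by positivity
          calc 2 * Real.sqrt π * ((n0:ℝ)/Real.exp 1)^n0
              = Real.sqrt π * (2 * ((n0:ℝ)/Real.exp 1)^n0) := by ring
            _ ≤ Real.sqrt π * (Real.sqrt (2*(n0:ℕ):ℝ) * ((n0:ℝ)/Real.exp 1)^n0) :=
                mul_le_mul_of_nonneg_left
                  (mul_le_mul_of_nonneg_right hsqrt2n hp) hsp_pos.le
      _ ≤ (n0.factorial:ℝ) := hstir
  -- final chain
  have hpow_eq : x^n0 / ((n0:ℝ)/Real.exp 1)^n0 = A^n0 := by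
    rw [← div_pow, hAx]
    congr 1
    field_simp
    try ring
  have hden_pos : (0:ℝ) < ((n0:ℝ)/Real.exp 1)^n0 := by
    apply pow_pos
    positivity
  have hxn0_le : x^n0/(n0.factorial:ℝ) ≤ A^n0 / (2 * Real.sqrt π) := by
    rw [div_le_div_iff₀ (by exact_mod_cast n0.factorial_pos) (by positivity)]
    rw [← hpow_eq]
    rw [div_mul_eq_mul_div, le_div_iff₀ hden_pos]
    have hxn : 0 ≤ x^n0 := by positivity
    nlinarith [hfac_lb, hxn]
  have hfinal : 2 * (x^n0/(n0.factorial:ℝ) * (1-r)⁻¹) ≤ 4 / (3 * Real.sqrt π) * A^n0 := by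
    have hinv : (1-r)⁻¹ ≤ 4/3 := by
      rw [inv_le_comm₀ (by linarith) (by norm_num)]
      linarith
    have hxn0_nn : 0 ≤ x^n0/(n0.factorial:ℝ) := by positivity
    have hAn_nn : 0 ≤ A^n0 := by positivity
    have hinv_nn : 0 ≤ (1-r)⁻¹ := by
      have : (0:ℝ) < 1 - r := by linarith
      positivity
    calc 2 * (x^n0/(n0.factorial:ℝ) * (1-r)⁻¹)
        ≤ 2 * (A^n0 / (2 * Real.sqrt π) * (4/3)) := by
          apply mul_le_mul_of_nonneg_left _ (by norm_num)
          apply mul_le_mul hxn0_le hinv hinv_nn (by positivity)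
      _ = 4 / (3 * Real.sqrt π) * A^n0 := by
          field_simp
  have hAn0 : A ^ n0 = A ^ (2*(R+1)) := by
    congr 1
    try omega
  calc 2 * ∑' l : ℕ, |besselJ (2*R+2*l+2) τ|
      ≤ 2 * (x^n0/(n0.factorial:ℝ) * (1-r)⁻¹) := by linarith [htsum]
    _ ≤ 4 / (3 * Real.sqrt π) * A^n0 := hfinal
    _ = 4 / (3 * Real.sqrt π) * A^(2*(R+1)) := by rw [hAn0]
    _ ≤ ε := h
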